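/- arXiv:2311.06232 — 3 statements merged into one kernel-verified Lean document; each statement's English description precedes it below -/
import Mathlib

section
/- Let G be a weighted undirected graph with Laplacian L_G. Then the effective resistance R(u,v) = b_{uv}ᵀ L_G⁺ b_{uv} satisfies the triangle inequality: for any vertices u, v, x in the same connected component, R(u,x) ≤ R(u,v) + R(v,x). -/
open Matrix

/-- `bv u v = e_u - e_v`. -/
def bv {n : ℕ} (u v : Fin n) : Fin n → ℝ := Pi.single u 1 - Pi.single v 1

/-- The four Moore–Penrose conditions characterizing the pseudoinverse. -/
def MoorePenrose {n : Type*} [Fintype n] (L Lp : Matrix n n ℝ) : Prop :=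
  L * Lp * L = L ∧ Lp * L * Lp = Lp ∧ (L * Lp)ᵀ = L * Lp ∧ (Lp * L)ᵀ = Lp * L

lemma bv_dot {n : ℕ} (s t : Fin n) (f : Fin n → ℝ) : bv s t ⬝ᵥ f = f s - f t := by
  simp [bv, sub_dotProduct, single_dotProduct]

/-- summation functional -/
def sumL (n : ℕ) : (Fin n → ℝ) →ₗ[ℝ] ℝ where
  toFun f := ∑ i, f i
  map_add' f g := by simp [Finset.sum_add_distrib]
  map_smul' c f := by simp [Finset.mul_sum]

/-- Maximum principle: if `L φ = b_{st}` then `φ` attains its max at `s`. -/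
lemma max_principle {n : ℕ} (W : Fin n → Fin n → ℝ)
    (hsymm : ∀ u v, W u v = W v u) (hnonneg : ∀ u v, 0 ≤ W u v)
    (L : Matrix (Fin n) (Fin n) ℝ)
    (hLf : ∀ (f : Fin n → ℝ) w, (L *ᵥ f) w = ∑ k, W w k * (f w - f k))
    (hker : ∀ g : Fin n → ℝ, L *ᵥ g = 0 → ∃ c : ℝ, g = fun _ => c)
    (s t : Fin n) (φ : Fin n → ℝ) (hφ : L *ᵥ φ = bv s t)
    (w : Fin n) : φ w ≤ φ s := by
  by_contra hlt
  push_neg at hlt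
  obtain ⟨w0, -, hw0⟩ := Finset.exists_max_image Finset.univ φ ⟨w, Finset.mem_univ w⟩
  set m := φ w0 with hm
  have hsm : φ s < m := lt_of_lt_of_le hlt (hw0 w (Finset.mem_univ w))
  have key : ∀ p, φ p = m → ∀ k, W p k ≠ 0 → φ k = m := by
    intro p hp k hk
    have hps : p ≠ s := by rintro rfl; exact absurd hp (ne_of_lt hsm)
    have h1 : (L *ᵥ φ) p ≤ 0 := by
      rw [hφ]
      simp only [bv, Pi.sub_apply, Pi.single_apply, if_neg hps]
      split <;> norm_num
    have h2 : ∀ j ∈ Finset.univ, 0 ≤ W p j * (φ p - φ j) := fun j _ =>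
      mul_nonneg (hnonneg p j) (by rw [hp]; linarith [hw0 j (Finset.mem_univ j)])
    have h3 : ∑ j, W p j * (φ p - φ j) = 0 :=
      le_antisymm (by rw [← hLf]; exact h1) (Finset.sum_nonneg h2)
    have h4 := (Finset.sum_eq_zero_iff_of_nonneg h2).mp h3 k (Finset.mem_univ k)
    rcases mul_eq_zero.mp h4 with h | h
    · exact absurd h hk
    · rw [← hp]; linarith
  have hLg : L *ᵥ (fun p => if φ p = m then (1:ℝ) else 0) = 0 := by
    funext p
    rw [hLf]
    simp only [Pi.zero_apply]
    apply Finset.sum_eq_zero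
    intro k _
    rcases eq_or_ne (W p k) 0 with h | h
    · simp [h]
    · by_cases hp : φ p = m
      · have hk2 := key p hp k h
        simp [hp, hk2]
      · by_cases hk2 : φ k = m
        · exact absurd (key k hk2 p (by rw [hsymm k p]; exact h)) hp
        · simp [hp, hk2]
  obtain ⟨c, hc⟩ := hker _ hLg
  have h1 : (if φ w0 = m then (1:ℝ) else 0) = c := congrFun hc w0
  have h0 : (if φ s = m then (1:ℝ) else 0) = c := congrFun hc s
  rw [if_pos hm.symm] at h1
  rw [if_neg (ne_of_lt hsm)] at h0
  rw [← h1] at h0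
  norm_num at h0

/-- For a connected weighted undirected graph with Laplacian `L`, the effective resistance
`R(u,v) = b_{uv}ᵀ L⁺ b_{uv}` satisfies the triangle inequality
`R(u,x) ≤ R(u,v) + R(v,x)`. -/
theorem stmt_4 {n : ℕ} (hn : 0 < n) (W : Fin n → Fin n → ℝ)
    (hsymm : ∀ u v, W u v = W v u) (hnonneg : ∀ u v, 0 ≤ W u v)
    (hdiag : ∀ u, W u u = 0)
    (L : Matrix (Fin n) (Fin n) ℝ)
    (hL : L = Matrix.of fun i j => if i = j then ∑ k, W i k else -(W i j))
    (hconn : L.rank = n - 1)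
    (Lp : Matrix (Fin n) (Fin n) ℝ) (hLp : MoorePenrose L Lp)
    (R : Fin n → Fin n → ℝ)
    (hR : ∀ u v, R u v = bv u v ⬝ᵥ (Lp *ᵥ bv u v))
    (u v x : Fin n) :
    R u x ≤ R u v + R v x := by
  -- entrywise formula for L
  have hLe : ∀ i j, L i j = (if i = j then ∑ k, W i k else 0) - W i j := by
    intro i j
    rw [hL]
    simp only [Matrix.of_apply]
    by_cases h : i = j
    · subst h; rw [if_pos rfl, if_pos rfl, hdiag]; ring
    · rw [if_neg h, if_neg h]; ring
  -- mulVec formula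
  have hLf : ∀ (f : Fin n → ℝ) w, (L *ᵥ f) w = ∑ k, W w k * (f w - f k) := by
    intro f w
    simp only [Matrix.mulVec, dotProduct]
    rw [Finset.sum_congr rfl (fun j _ => by rw [hLe w j])]
    simp only [sub_mul, ite_mul, zero_mul, mul_sub, Finset.sum_sub_distrib,
      Finset.sum_ite_eq, Finset.mem_univ, if_pos, Finset.sum_mul]
  -- symmetry of L
  have hLsymm : ∀ i j, L i j = L j i := by
    intro i j
    rcases eq_or_ne i j with rfl | h
    · rfl
    · rw [hLe i j, hLe j i, if_neg h, if_neg (Ne.symm h), hsymm]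
  -- row sums of L are zero
  have hrow : ∀ i, ∑ j, L i j = 0 := by
    intro i
    have h := hLf (fun _ => 1) i
    simpa [Matrix.mulVec, dotProduct] using h
  -- kernel of L is constants
  have hones : L *ᵥ (fun _ => (1:ℝ)) = 0 := by
    funext p; rw [hLf]; simp
  have hkerdim : Module.finrank ℝ (LinearMap.ker L.mulVecLin) = 1 := by
    have h := LinearMap.finrank_range_add_finrank_ker L.mulVecLin
    unfold Matrix.rank at hconn
    rw [hconn] at h
    simp only [Module.finrank_pi, Fintype.card_fin] at h
    omega
  have hkerspan : LinearMap.ker L.mulVecLin = Submodule.span ℝ {fun _ => (1:ℝ)} := by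
    symm
    apply Submodule.eq_of_le_of_finrank_eq
    · rw [Submodule.span_le, Set.singleton_subset_iff]
      simpa [LinearMap.mem_ker, Matrix.mulVecLin_apply] using hones
    · rw [hkerdim, finrank_span_singleton]
      intro h
      have := congrFun h ⟨0, hn⟩
      norm_num at this
  have hker : ∀ g : Fin n → ℝ, L *ᵥ g = 0 → ∃ c : ℝ, g = fun _ => c := by
    intro g hg
    have hmem : g ∈ LinearMap.ker L.mulVecLin := by
      simpa [LinearMap.mem_ker, Matrix.mulVecLin_apply] using hg
    rw [hkerspan] at hmem
    obtain ⟨c, hc⟩ := Submodule.mem_span_singleton.mp hmem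
    exact ⟨c, by rw [← hc]; funext p; simp⟩
  -- range of L is the zero-sum subspace
  have hrange : LinearMap.range L.mulVecLin = LinearMap.ker (sumL n) := by
    apply Submodule.eq_of_le_of_finrank_eq
    · rintro f ⟨y, rfl⟩
      simp only [LinearMap.mem_ker, sumL, LinearMap.coe_mk, AddHom.coe_mk,
        Matrix.mulVecLin_apply, Matrix.mulVec, dotProduct]
      rw [Finset.sum_comm]
      apply Finset.sum_eq_zero
      intro j _
      rw [← Finset.sum_mul]
      have : ∑ i, L i j = 0 := by
        rw [Finset.sum_congr rfl (fun i _ => hLsymm i j), hrow]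
      rw [this, zero_mul]
    · have hsurj : LinearMap.range (sumL n) = ⊤ := by
        rw [LinearMap.range_eq_top]
        intro r
        exact ⟨Pi.single ⟨0, hn⟩ r, by simp [sumL]⟩
      have h := LinearMap.finrank_range_add_finrank_ker (sumL n)
      rw [hsurj] at h
      simp only [Module.finrank_pi, Fintype.card_fin, finrank_top, Module.finrank_self] at h
      unfold Matrix.rank at hconn
      omega
  have hbvmem : ∀ a b : Fin n, ∃ y, L *ᵥ y = bv a b := by
    intro a b
    have : bv a b ∈ LinearMap.ker (sumL n) := by
      simp [sumL, bv, Finset.sum_sub_distrib]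
    rw [← hrange] at this
    obtain ⟨y, hy⟩ := this
    exact ⟨y, by rwa [Matrix.mulVecLin_apply] at hy⟩
  -- L * (Lp *ᵥ bv a b) = bv a b
  have hfix : ∀ a b : Fin n, L *ᵥ (Lp *ᵥ bv a b) = bv a b := by
    intro a b
    obtain ⟨y, hy⟩ := hbvmem a b
    rw [← hy, Matrix.mulVec_mulVec, Matrix.mulVec_mulVec, hLp.1]
  -- cross terms
  have cross1 : bv u v ⬝ᵥ (Lp *ᵥ bv v x) ≤ 0 := by
    rw [bv_dot]
    have := max_principle W hsymm hnonneg L hLf hker v x (Lp *ᵥ bv v x) (hfix v x) u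
    linarith
  have cross2 : bv v x ⬝ᵥ (Lp *ᵥ bv u v) ≤ 0 := by
    have hneg : bv u v = -(bv v u) := by unfold bv; abel
    rw [hneg, Matrix.mulVec_neg, dotProduct_neg, bv_dot]
    have := max_principle W hsymm hnonneg L hLf hker v u (Lp *ᵥ bv v u) (hfix v u) x
    linarith
  -- expansion
  have hsplit : bv u x = bv u v + bv v x := by unfold bv; abel
  rw [hR u x, hR u v, hR v x, hsplit, Matrix.mulVec_add, add_dotProduct,
    dotProduct_add, dotProduct_add]
  linarith
end

section
/- Let F⃗ be a directed cycle on vertex set C of size L with all edges consistently oriented and uniform weight w, with directed Laplacian L_F = w(I - P) for a cyclic permutation matrix P. Let G be a graph containing C with undirected Laplacian L_G, and suppose every pair u,v ∈ C satisfies w·b_{uv}ᵀ L_G⁺ b_{uv} ≤ (L-1)ρ. Then L_Fᵀ L_G⁺ L_F ⪯ O(L²ρ)·L_C, where L_C = (w/2)(2I - P - Pᵀ) is the undirected cycle Laplacian. -/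
open Matrix

/-- Directed Laplacian (`D - Aᵀ`) of a single directed edge `u → v` of weight `w`. -/
def dirLap {n : ℕ} (u v : Fin n) (w : ℝ) : Matrix (Fin n) (Fin n) ℝ :=
  w • Matrix.vecMulVec (bv u v) (Pi.single u 1)

section Aux

variable {n : Type*} [Fintype n]

lemma aux_mulVec_sum {m N : ℕ} (A : Matrix (Fin m) (Fin m) ℝ) (v : Fin N → Fin m → ℝ) :
    A *ᵥ (∑ k, v k) = ∑ k, A *ᵥ v k := by
  ext i
  simp only [Matrix.mulVec, dotProduct, Finset.sum_apply, Finset.mul_sum]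
  exact Finset.sum_comm

lemma aux_dotProduct_sum {m N : ℕ} (a : Fin m → ℝ) (v : Fin N → Fin m → ℝ) :
    a ⬝ᵥ (∑ k, v k) = ∑ k, a ⬝ᵥ v k := by
  simp only [dotProduct, Finset.sum_apply, Finset.mul_sum]
  exact Finset.sum_comm

lemma aux_sum_dotProduct {m N : ℕ} (a : Fin m → ℝ) (v : Fin N → Fin m → ℝ) :
    (∑ k, v k) ⬝ᵥ a = ∑ k, v k ⬝ᵥ a := by
  simp only [dotProduct, Finset.sum_apply, Finset.sum_mul]
  exact Finset.sum_comm

/-- Uniqueness of Moore–Penrose pseudoinverse. -/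
lemma mp_unique [DecidableEq n] {A X Y : Matrix n n ℝ} (hX : MoorePenrose A X)
    (hY : MoorePenrose A Y) : X = Y := by
  obtain ⟨hX1, hX2, hX3, hX4⟩ := hX
  obtain ⟨hY1, hY2, hY3, hY4⟩ := hY
  have hXA : X * A = Y * A := by
    have key : (X * A) * (Y * A) = X * A := by
      rw [show (X * A) * (Y * A) = X * (A * Y * A) by noncomm_ring, hY1]
    calc X * A = ((X * A) * (Y * A))ᵀ := by rw [key, hX4]
    _ = (Y * A)ᵀ * (X * A)ᵀ := Matrix.transpose_mul _ _
    _ = (Y * A) * (X * A) := by rw [hY4, hX4]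
    _ = Y * (A * X * A) := by noncomm_ring
    _ = Y * A := by rw [hX1]
  have hAX : A * X = A * Y := by
    have key : (A * Y) * (A * X) = A * X := by
      rw [show (A * Y) * (A * X) = (A * Y * A) * X by noncomm_ring, hY1]
    calc A * X = ((A * Y) * (A * X))ᵀ := by rw [key, hX3]
    _ = (A * X)ᵀ * (A * Y)ᵀ := Matrix.transpose_mul _ _
    _ = (A * X) * (A * Y) := by rw [hX3, hY3]
    _ = (A * X * A) * Y := by noncomm_ring
    _ = A * Y := by rw [hX1]
  calc X = X * A * X := hX2.symm
  _ = X * (A * Y) := by rw [Matrix.mul_assoc, hAX]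
  _ = (Y * A) * Y := by rw [← Matrix.mul_assoc, hXA]
  _ = Y := hY2

/-- If `A` is symmetric, its MP pseudoinverse is symmetric. -/
lemma mp_symm [DecidableEq n] {A X : Matrix n n ℝ} (hA : Aᵀ = A) (hX : MoorePenrose A X) :
    Xᵀ = X := by
  refine mp_unique ?_ hX
  obtain ⟨h1, h2, h3, h4⟩ := hX
  refine ⟨?_, ?_, ?_, ?_⟩
  · calc A * Xᵀ * A = (Aᵀ * X * Aᵀ)ᵀ := by
          simp [Matrix.transpose_mul, Matrix.mul_assoc]
    _ = A := by rw [hA, h1, hA]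
  · calc Xᵀ * A * Xᵀ = (Xᵀ * Aᵀ) * Xᵀ := by rw [hA]
    _ = (X * A * X)ᵀ := by simp [Matrix.transpose_mul, Matrix.mul_assoc]
    _ = Xᵀ := by rw [h2]
  · calc (A * Xᵀ)ᵀ = X * Aᵀ := by simp [Matrix.transpose_mul]
    _ = X * A := by rw [hA]
    _ = (X * A)ᵀ := h4.symm
    _ = Aᵀ * Xᵀ := Matrix.transpose_mul _ _
    _ = A * Xᵀ := by rw [hA]
  · calc (Xᵀ * A)ᵀ = Aᵀ * X := by simp [Matrix.transpose_mul]
    _ = A * X := by rw [hA]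
    _ = (A * X)ᵀ := h3.symm
    _ = Xᵀ * Aᵀ := Matrix.transpose_mul _ _
    _ = Xᵀ * A := by rw [hA]

lemma bv_dot_s8 {m : ℕ} (u v : Fin m) (x : Fin m → ℝ) : bv u v ⬝ᵥ x = x u - x v := by
  simp [bv, sub_dotProduct, single_dotProduct]

/-- Quadratic-form Cauchy–Schwarz-type bound: `q(∑ v_k) ≤ N ∑ q(v_k)` for PSD `Q`. -/
lemma quad_sum_le {m N : ℕ} {Q : Matrix (Fin m) (Fin m) ℝ} (hQ : Q.PosSemidef)
    (v : Fin N → Fin m → ℝ) :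
    (∑ k, v k) ⬝ᵥ (Q *ᵥ ∑ k, v k) ≤ (N : ℝ) * ∑ k, v k ⬝ᵥ (Q *ᵥ v k) := by
  have hQT : Qᵀ = Q := by
    have h := hQ.1
    rwa [← Matrix.conjTranspose_eq_transpose_of_trivial]
  have hQs : ∀ i j, Q i j = Q j i := fun i j => by
    have h := congrFun (congrFun hQT j) i
    rwa [Matrix.transpose_apply] at h
  have hsymm : ∀ a b : Fin m → ℝ, a ⬝ᵥ (Q *ᵥ b) = b ⬝ᵥ (Q *ᵥ a) := by
    intro a b
    simp only [dotProduct, Matrix.mulVec, Finset.mul_sum]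
    rw [Finset.sum_comm]
    exact Finset.sum_congr rfl fun j _ => Finset.sum_congr rfl fun i _ => by
      rw [hQs i j]; ring
  have hpair : ∀ a b : Fin m → ℝ,
      a ⬝ᵥ (Q *ᵥ b) ≤ (a ⬝ᵥ (Q *ᵥ a) + b ⬝ᵥ (Q *ᵥ b)) / 2 := by
    intro a b
    have h0 : (0:ℝ) ≤ (a - b) ⬝ᵥ (Q *ᵥ (a - b)) := by
      have := hQ.dotProduct_mulVec_nonneg (a - b); simpa using this
    rw [Matrix.mulVec_sub, sub_dotProduct, dotProduct_sub,
      dotProduct_sub] at h0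
    have hba : b ⬝ᵥ (Q *ᵥ a) = a ⬝ᵥ (Q *ᵥ b) := hsymm b a
    linarith
  calc (∑ k, v k) ⬝ᵥ (Q *ᵥ ∑ k, v k)
      = ∑ j, ∑ k, v j ⬝ᵥ (Q *ᵥ v k) := by
        rw [aux_mulVec_sum, aux_sum_dotProduct]
        exact Finset.sum_congr rfl fun j _ => aux_dotProduct_sum _ _
  _ ≤ ∑ j, ∑ k, (v j ⬝ᵥ (Q *ᵥ v j) + v k ⬝ᵥ (Q *ᵥ v k)) / 2 := by
        refine Finset.sum_le_sum fun j _ => Finset.sum_le_sum fun k _ => hpair _ _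
  _ = (N : ℝ) * ∑ k, v k ⬝ᵥ (Q *ᵥ v k) := by
        simp only [← Finset.sum_div, Finset.sum_add_distrib, Finset.sum_const,
          Finset.card_univ, Fintype.card_fin, nsmul_eq_mul, ← Finset.mul_sum]
        ring

lemma aux_sumMat_mulVec {m N : ℕ} (A : Fin N → Matrix (Fin m) (Fin m) ℝ) (x : Fin m → ℝ) :
    (∑ k, A k) *ᵥ x = ∑ k, A k *ᵥ x := by
  ext i
  simp only [Matrix.mulVec, dotProduct, Finset.sum_apply, Matrix.sum_apply,
    Finset.sum_mul]
  exact Finset.sum_comm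

lemma vecMulVec_mulVec' {m : ℕ} (a b x : Fin m → ℝ) :
    Matrix.vecMulVec a b *ᵥ x = (b ⬝ᵥ x) • a := by
  ext i
  simp only [Matrix.mulVec, dotProduct, Matrix.vecMulVec_apply, Pi.smul_apply,
    smul_eq_mul, Finset.sum_mul]
  exact Finset.sum_congr rfl fun j _ => by ring

lemma dirLap_mulVec {m : ℕ} (u v : Fin m) (w : ℝ) (x : Fin m → ℝ) :
    dirLap u v w *ᵥ x = (w * x u) • bv u v := by
  rw [dirLap, Matrix.smul_mulVec, vecMulVec_mulVec', single_dotProduct,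
    smul_smul, one_mul]

end Aux

/-- Let `F⃗` be a consistently oriented directed cycle on `L` vertices of a connected graph
`G` with uniform weight `w`, with directed Laplacian `L_F`, and suppose every pair `u, v`
of cycle vertices satisfies `w·b_{uv}ᵀ L_G⁺ b_{uv} ≤ (L-1)·ρ`.  Then
`L_Fᵀ L_G⁺ L_F ⪯ O(L²ρ)·L_C` where `L_C` is the undirected cycle Laplacian: there is an
absolute constant `κ > 0` such that `(κ L² ρ)·L_C − L_Fᵀ L_G⁺ L_F` is PSD. -/
theorem stmt_8 :
    ∃ κ : ℝ, 0 < κ ∧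
      ∀ (n L : ℕ) [NeZero L] (c : Fin L → Fin n), Function.Injective c →
      ∀ (w ρ : ℝ), 0 < w → 0 ≤ ρ →
      ∀ (LG : Matrix (Fin n) (Fin n) ℝ), LG.PosSemidef →
      (∀ x : Fin n → ℝ, LG *ᵥ x = 0 → ∃ t : ℝ, x = fun _ => t) →
      ∀ (Lp : Matrix (Fin n) (Fin n) ℝ), MoorePenrose LG Lp →
      (∀ k l : Fin L,
        w * (bv (c k) (c l) ⬝ᵥ (Lp *ᵥ bv (c k) (c l))) ≤ ((L : ℝ) - 1) * ρ) →
      ∀ (LF LC : Matrix (Fin n) (Fin n) ℝ),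
        LF = ∑ k : Fin L, dirLap (c k) (c (k + 1)) w →
        LC = ∑ k : Fin L, (w / 2) •
          Matrix.vecMulVec (bv (c k) (c (k + 1))) (bv (c k) (c (k + 1))) →
        ((κ * (L : ℝ) ^ 2 * ρ) • LC - LFᵀ * Lp * LF).PosSemidef := by
  refine ⟨2, by norm_num, ?_⟩
  intro n L _ c _ w ρ hw hρ LG hLG _ Lp hmp hpair LF LC hLF hLC
  -- symmetry and PSD of Lp
  have hLpT : Lpᵀ = Lp := mp_symm hLG.1.eq hmp
  have hLpPSD : Lp.PosSemidef := by
    have h2 := hmp.2.1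
    have : Lp = Lpᵀ * LG * Lp := by rw [hLpT]; exact h2.symm
    rw [this]
    have h := hLG.conjTranspose_mul_mul_same Lp
    rwa [Matrix.conjTranspose_eq_transpose_of_trivial] at h
  have hLGT : LGᵀ = LG := by
    have h := hLG.1
    rwa [← Matrix.conjTranspose_eq_transpose_of_trivial]
  -- abbreviations
  set a : ℝ := 2 * (L : ℝ) ^ 2 * ρ with ha
  have hLCT : LCᵀ = LC := by
    rw [hLC, Matrix.transpose_sum]
    refine Finset.sum_congr rfl fun k _ => ?_
    rw [Matrix.transpose_smul]
    congr 1
    ext i j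
    rw [Matrix.transpose_apply, Matrix.vecMulVec_apply, Matrix.vecMulVec_apply, mul_comm]
  have hQT : (LFᵀ * Lp * LF)ᵀ = LFᵀ * Lp * LF := by
    rw [Matrix.transpose_mul, Matrix.transpose_mul, Matrix.transpose_transpose, hLpT,
      Matrix.mul_assoc]
  refine Matrix.posSemidef_iff_dotProduct_mulVec.mpr ⟨?_, ?_⟩
  · show (a • LC - LFᵀ * Lp * LF)ᴴ = _
    rw [Matrix.conjTranspose_eq_transpose_of_trivial, Matrix.transpose_sub,
      Matrix.transpose_smul, hLCT, hQT]
  · intro x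
    have hstar : star x = x := funext fun i => star_trivial (x i)
    rw [hstar]
    -- edge difference and decomposition
    set d : Fin L → ℝ := fun k => x (c k) - x (c (k - 1)) with hd
    set P : Fin L → Fin n → ℝ := fun k => Pi.single (c k) (1 : ℝ) with hP
    have hreidx : ∑ k : Fin L, (w * x (c k)) • P (k + 1)
        = ∑ k : Fin L, (w * x (c (k - 1))) • P k := by
      refine Fintype.sum_equiv (Equiv.addRight (1 : Fin L)) _ _ fun k => ?_
      simp [Equiv.coe_addRight, add_sub_cancel_right]
    have hsumd : ∑ k : Fin L, (w * d k) = 0 := by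
      have : ∑ k : Fin L, w * x (c k) = ∑ k : Fin L, w * x (c (k - 1)) := by
        refine Fintype.sum_equiv (Equiv.addRight (1 : Fin L)) _ _ fun k => ?_
        simp [Equiv.coe_addRight, add_sub_cancel_right]
      simp only [hd, mul_sub, Finset.sum_sub_distrib]
      rw [this]; ring
    have hLFx : LF *ᵥ x = ∑ k : Fin L, (w * d k) • bv (c k) (c 0) := by
      rw [hLF, aux_sumMat_mulVec]
      have h1 : ∀ k : Fin L, dirLap (c k) (c (k + 1)) w *ᵥ x
          = (w * x (c k)) • P k - (w * x (c k)) • P (k + 1) := by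
        intro k
        rw [dirLap_mulVec]
        show _ = _
        rw [← smul_sub]
        rfl
      have h2 : ∀ k : Fin L, (w * d k) • bv (c k) (c 0)
          = (w * d k) • P k - (w * d k) • P 0 := fun k => by rw [← smul_sub]; rfl
      simp only [h1, h2, Finset.sum_sub_distrib]
      rw [hreidx]
      have h3 : ∑ k : Fin L, (w * d k) • P 0 = (∑ k : Fin L, (w * d k)) • P 0 := by
        rw [Finset.sum_smul]
      rw [h3, hsumd, zero_smul, sub_zero]
      rw [← Finset.sum_sub_distrib]
      refine Finset.sum_congr rfl fun k _ => ?_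
      rw [← sub_smul]
      congr 1
      simp only [hd]; ring
    -- quadratic form of LC
    set S : ℝ := ∑ k : Fin L, d k ^ 2 with hS
    have hLCx : x ⬝ᵥ (LC *ᵥ x) = (w / 2) * S := by
      rw [hLC, aux_sumMat_mulVec, aux_dotProduct_sum]
      have h1 : ∀ k : Fin L, x ⬝ᵥ (((w / 2) • Matrix.vecMulVec (bv (c k) (c (k + 1)))
            (bv (c k) (c (k + 1)))) *ᵥ x)
          = (w / 2) * (x (c k) - x (c (k + 1))) ^ 2 := by
        intro k
        rw [Matrix.smul_mulVec, vecMulVec_mulVec', dotProduct_smul,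
          dotProduct_smul, smul_eq_mul, smul_eq_mul, bv_dot_s8,
          dotProduct_comm, bv_dot_s8]
        ring
      simp only [h1]
      rw [← Finset.mul_sum, hS]
      congr 1
      refine Fintype.sum_equiv (Equiv.addRight (1 : Fin L)) _ _ fun k => ?_
      simp only [hd, Equiv.coe_addRight, add_sub_cancel_right]
      ring
    have hSnn : 0 ≤ S := Finset.sum_nonneg fun k _ => sq_nonneg _
    -- quadratic form of the directed part
    set v : Fin L → Fin n → ℝ := fun k => (w * d k) • bv (c k) (c 0) with hv
    have hquad : (LF *ᵥ x) ⬝ᵥ (Lp *ᵥ (LF *ᵥ x))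
        ≤ (L : ℝ) * ∑ k : Fin L, v k ⬝ᵥ (Lp *ᵥ v k) := by
      rw [hLFx]
      exact quad_sum_le hLpPSD v
    have hterm : ∀ k : Fin L, v k ⬝ᵥ (Lp *ᵥ v k) ≤ w * d k ^ 2 * (((L : ℝ) - 1) * ρ) := by
      intro k
      have : v k ⬝ᵥ (Lp *ᵥ v k)
          = (w * d k ^ 2) * (w * (bv (c k) (c 0) ⬝ᵥ (Lp *ᵥ bv (c k) (c 0)))) := by
        simp only [hv, Matrix.mulVec_smul, smul_dotProduct, dotProduct_smul,
          smul_eq_mul]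
        ring
      rw [this]
      have hwd : 0 ≤ w * d k ^ 2 := mul_nonneg hw.le (sq_nonneg _)
      calc (w * d k ^ 2) * (w * (bv (c k) (c 0) ⬝ᵥ (Lp *ᵥ bv (c k) (c 0))))
          ≤ (w * d k ^ 2) * (((L : ℝ) - 1) * ρ) :=
            mul_le_mul_of_nonneg_left (hpair k 0) hwd
      _ = w * d k ^ 2 * (((L : ℝ) - 1) * ρ) := by ring
    have hsum2 : ∑ k : Fin L, w * d k ^ 2 * (((L : ℝ) - 1) * ρ)
        = w * (((L : ℝ) - 1) * ρ) * S := by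
      rw [hS, Finset.mul_sum]
      exact Finset.sum_congr rfl fun k _ => by ring
    have hq2 : (LF *ᵥ x) ⬝ᵥ (Lp *ᵥ (LF *ᵥ x))
        ≤ (L : ℝ) * (w * (((L : ℝ) - 1) * ρ) * S) := by
      refine hquad.trans ?_
      rw [← hsum2]
      exact mul_le_mul_of_nonneg_left (Finset.sum_le_sum fun k _ => hterm k)
        (Nat.cast_nonneg L)
    -- put everything together
    have hexp : x ⬝ᵥ ((a • LC - LFᵀ * Lp * LF) *ᵥ x)
        = a * (x ⬝ᵥ (LC *ᵥ x)) - (LF *ᵥ x) ⬝ᵥ (Lp *ᵥ (LF *ᵥ x)) := by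
      rw [Matrix.sub_mulVec, dotProduct_sub, Matrix.smul_mulVec,
        dotProduct_smul, smul_eq_mul]
      congr 1
      rw [← Matrix.mulVec_mulVec, ← Matrix.mulVec_mulVec, Matrix.dotProduct_mulVec x LFᵀ,
        Matrix.vecMul_transpose]
    rw [hexp, hLCx]
    have hkey : a * ((w / 2) * S) - (L : ℝ) * (w * (((L : ℝ) - 1) * ρ) * S)
        = (L : ℝ) * ρ * w * S := by rw [ha]; ring
    have hpos : 0 ≤ (L : ℝ) * ρ * w * S := by positivity
    linarith
end

section
/- Let C⃗ be a directed cycle on vertices in a graph, let F⃗ be the consistently oriented version of C⃗ and S the undirected graph on the reversed edges, with Ltil = L_F - L_S (directed Laplacian of F minus undirected Laplacian of S). Then both random outcomes of toggling the cycle—adding L_C + L_F - L_S or L_C - L_F + L_S (each the Laplacian of keeping doubled clockwise or counter-clockwise edges)—preserve, for every vertex, the difference between weighted in-degree and weighted out-degree of C⃗. -/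
open Matrix Finset

/-- Undirected Laplacian of a single edge `{u, v}` of weight `w`. -/
def undirLap {n : ℕ} (u v : Fin n) (w : ℝ) : Matrix (Fin n) (Fin n) ℝ :=
  w • Matrix.vecMulVec (bv u v) (bv u v)


lemma sum_mulVec' {n : ℕ} {ι : Type*} (t : Finset ι) (A : ι → Matrix (Fin n) (Fin n) ℝ)
    (v : Fin n → ℝ) : (∑ k ∈ t, A k) *ᵥ v = ∑ k ∈ t, A k *ᵥ v := by
  funext i
  simp [Matrix.mulVec, dotProduct, Finset.sum_apply, Matrix.sum_apply, Finset.sum_mul]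
  rw [Finset.sum_comm]

lemma undirLap_mulVec_one {n : ℕ} (u v : Fin n) (w : ℝ) :
    undirLap u v w *ᵥ (fun _ => (1 : ℝ)) = 0 := by
  funext i
  simp only [undirLap, mulVec, dotProduct, vecMulVec, bv, Matrix.smul_apply, Matrix.of_apply,
    smul_eq_mul, mul_one, Pi.sub_apply, Pi.zero_apply]
  rw [← Finset.mul_sum, ← Finset.mul_sum, Finset.sum_sub_distrib]
  simp [Finset.sum_pi_single']

lemma dirLap_mulVec_one {n : ℕ} (u v : Fin n) (w : ℝ) :
    dirLap u v w *ᵥ (fun _ => (1 : ℝ)) = w • bv u v := by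
  funext i
  simp only [dirLap, mulVec, dotProduct, vecMulVec, Matrix.smul_apply, Matrix.of_apply,
    smul_eq_mul, mul_one, Pi.smul_apply]
  rw [← Finset.mul_sum, ← Finset.mul_sum]
  simp [Finset.sum_pi_single']

/-- Let `C⃗` be a directed cycle (vertices `c 0, …, c (L-1)`, edge `k` oriented
`c k → c (k+1)` when `s k` is true — clockwise — and `c (k+1) → c k` otherwise), with
uniform weight `w`.  Let `F⃗` be the consistently oriented version, `S` the undirected
graph on the reversed edges and `Ltil = L_F - L_S`.  Then both toggling outcomes,
`L_C + L_F - L_S` and `L_C - L_F + L_S`, have the same row sums `(·) *ᵥ 𝟙` as `L_C`;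
i.e. for every vertex the difference between weighted out-degree and in-degree of `C⃗`
is preserved. -/
theorem stmt_12 {n L : ℕ} [NeZero L] (c : Fin L → Fin n) (hc : Function.Injective c)
    (s : Fin L → Bool) (w : ℝ) (hw : 0 < w)
    (LC LF LS : Matrix (Fin n) (Fin n) ℝ)
    (hLC : LC = ∑ k : Fin L,
      if s k then dirLap (c k) (c (k + 1)) w else dirLap (c (k + 1)) (c k) w)
    (hLF : LF = ∑ k : Fin L, dirLap (c k) (c (k + 1)) w)
    (hLS : LS = ∑ k ∈ Finset.univ.filter (fun k => ¬ s k), undirLap (c k) (c (k + 1)) w) :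
    (LC + LF - LS) *ᵥ (fun _ => (1 : ℝ)) = LC *ᵥ (fun _ => (1 : ℝ)) ∧
    (LC - LF + LS) *ᵥ (fun _ => (1 : ℝ)) = LC *ᵥ (fun _ => (1 : ℝ)) := by
  have hS : LS *ᵥ (fun _ => (1 : ℝ)) = 0 := by
    rw [hLS, sum_mulVec']
    simp [undirLap_mulVec_one]
  have hF : LF *ᵥ (fun _ => (1 : ℝ)) = 0 := by
    rw [hLF, sum_mulVec']
    simp only [dirLap_mulVec_one, bv]
    rw [← Finset.smul_sum, Finset.sum_sub_distrib]
    have : ∑ k : Fin L, (Pi.single (c (k + 1)) 1 : Fin n → ℝ)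
        = ∑ k : Fin L, (Pi.single (c k) 1 : Fin n → ℝ) :=
      Fintype.sum_equiv (Equiv.addRight 1) _ _ (fun k => rfl)
    rw [this]; simp
  refine ⟨?_, ?_⟩ <;>
    simp [Matrix.add_mulVec, Matrix.sub_mulVec, hF, hS]
end
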